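/- Let Θ be a nonempty index set and (κ_θ)_{θ∈Θ} a family of Markov kernels on ℝ^d with nonlinear Markov operator P̄f(x) = sup_{θ∈Θ} ∫ f dκ_θ(x,·); assume x ↦ P̄f(x) is Borel measurable for every bounded Borel measurable f ≥ 0. Let Φ : [0,∞) → [0,∞) be increasing with lim_{r→∞} Φ(r) = ∞, Ψ : ℝ^d × ℝ^d → [0,∞) Borel measurable, and assume the Harnack-type inequality Φ(P̄f(x)) ≤ P̄(Φ∘f)(y)·e^{Ψ(x,y)} for all bounded Borel measurable f ≥ 0 and all x, y ∈ ℝ^d. If μ is a quasi-invariant linear expectation of P̄, then every invariant linear expectation μ₀ of P̄ is absolutely continuous with respect to μ. -/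

import Mathlib

open MeasureTheory ProbabilityTheory Filter

/-- The nonlinear Markov operator `P̄ f x = ⨆ θ, ∫ f dκ_θ(x,·)` associated with a family
of Markov kernels on `ℝ^d`. -/
noncomputable def nlOp {d : ℕ} {Θ : Type*}
    (κ : Θ → Kernel (EuclideanSpace ℝ (Fin d)) (EuclideanSpace ℝ (Fin d)))
    (f : EuclideanSpace ℝ (Fin d) → ℝ) (x : EuclideanSpace ℝ (Fin d)) : ℝ :=
  ⨆ θ, ∫ y, f y ∂(κ θ x)

private lemma aux_integrable {α : Type*} [MeasurableSpace α] {μ : Measure α}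
    [IsFiniteMeasure μ] {f : α → ℝ} {C : ℝ} (hf : Measurable f) (h0 : ∀ x, 0 ≤ f x)
    (hC : ∀ x, f x ≤ C) : Integrable f μ := by
  refine ⟨hf.aestronglyMeasurable, ?_⟩
  refine HasFiniteIntegral.of_bounded (C := C) (ae_of_all _ fun x => ?_)
  rw [Real.norm_eq_abs, abs_of_nonneg (h0 x)]
  exact hC x

private lemma nlOp_nonneg {d : ℕ} {Θ : Type*}
    (κ : Θ → Kernel (EuclideanSpace ℝ (Fin d)) (EuclideanSpace ℝ (Fin d)))
    {f : EuclideanSpace ℝ (Fin d) → ℝ} (h0 : ∀ y, 0 ≤ f y) (x : EuclideanSpace ℝ (Fin d)) :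
    0 ≤ nlOp κ f x :=
  Real.iSup_nonneg fun _ => integral_nonneg h0

private lemma nlOp_le {d : ℕ} {Θ : Type*} [Nonempty Θ]
    (κ : Θ → Kernel (EuclideanSpace ℝ (Fin d)) (EuclideanSpace ℝ (Fin d)))
    (hκ : ∀ θ, IsMarkovKernel (κ θ))
    {f : EuclideanSpace ℝ (Fin d) → ℝ} {C : ℝ} (h0 : ∀ y, 0 ≤ f y)
    (hC : ∀ y, f y ≤ C) (x : EuclideanSpace ℝ (Fin d)) :
    nlOp κ f x ≤ C := by
  refine ciSup_le fun θ => ?_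
  haveI := hκ θ
  calc ∫ y, f y ∂(κ θ x) ≤ ∫ _, C ∂(κ θ x) :=
        integral_mono_of_nonneg (ae_of_all _ h0) (integrable_const C) (ae_of_all _ hC)
    _ = C := by simp

theorem stmt_2 {d : ℕ} {Θ : Type*} [Nonempty Θ]
    (κ : Θ → Kernel (EuclideanSpace ℝ (Fin d)) (EuclideanSpace ℝ (Fin d)))
    (hκ : ∀ θ, IsMarkovKernel (κ θ))
    (hPmeas : ∀ f : EuclideanSpace ℝ (Fin d) → ℝ, Measurable f → (∀ y, 0 ≤ f y) →
      (∃ C, ∀ y, f y ≤ C) → Measurable (nlOp κ f))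
    (Φ : ℝ → ℝ)
    (hΦmono : MonotoneOn Φ (Set.Ici 0))
    (hΦnonneg : ∀ r ∈ Set.Ici (0:ℝ), 0 ≤ Φ r)
    (hΦtop : Tendsto Φ atTop atTop)
    (Ψ : EuclideanSpace ℝ (Fin d) → EuclideanSpace ℝ (Fin d) → ℝ)
    (hΨmeas : Measurable (Function.uncurry Ψ))
    (hΨnonneg : ∀ x y, 0 ≤ Ψ x y)
    (hHarnack : ∀ f : EuclideanSpace ℝ (Fin d) → ℝ, Measurable f → (∀ y, 0 ≤ f y) →
      (∃ C, ∀ y, f y ≤ C) → ∀ x y,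
      Φ (nlOp κ f x) ≤ nlOp κ (fun z => Φ (f z)) y * Real.exp (Ψ x y))
    -- μ is a quasi-invariant linear expectation of P̄, with witness g
    (μ : Measure (EuclideanSpace ℝ (Fin d))) [IsProbabilityMeasure μ]
    (g : EuclideanSpace ℝ (Fin d) → ℝ) (hgmeas : Measurable g)
    (hg0 : ∀ x, 0 ≤ g x) (hgbd : ∃ C, ∀ x, g x ≤ C)
    (hquasi : ∀ f : EuclideanSpace ℝ (Fin d) → ℝ, Measurable f → (∀ y, 0 ≤ f y) →
      (∃ C, ∀ y, f y ≤ C) → ∫ x, nlOp κ f x ∂μ ≤ ∫ x, g x * f x ∂μ)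
    -- μ₀ is an invariant linear expectation of P̄
    (μ₀ : Measure (EuclideanSpace ℝ (Fin d))) [IsProbabilityMeasure μ₀]
    (hinv : ∀ f : EuclideanSpace ℝ (Fin d) → ℝ, Measurable f → (∀ y, 0 ≤ f y) →
      (∃ C, ∀ y, f y ≤ C) → ∫ x, nlOp κ f x ∂μ₀ = ∫ x, f x ∂μ₀) :
    μ₀ ≪ μ := by
  classical
  obtain ⟨C, hgC⟩ := hgbd
  have hC0 : 0 ≤ C := le_trans (hg0 0) (hgC 0)
  refine Measure.AbsolutelyContinuous.mk fun A hA hAμ => ?_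
  by_contra hA0
  -- the indicator of A
  set f : EuclideanSpace ℝ (Fin d) → ℝ := A.indicator 1 with hf
  have hfmeas : Measurable f := measurable_const.indicator hA
  have hf0 : ∀ y, 0 ≤ f y := fun y => Set.indicator_nonneg (fun _ _ => zero_le_one) y
  have hf1 : ∀ y, f y ≤ 1 := fun y => Set.indicator_le_self' (fun _ _ => zero_le_one) y
  -- the integral of P̄ f with respect to μ₀ is positive
  have hint : ∫ x, nlOp κ f x ∂μ₀ = (μ₀ A).toReal := by
    rw [hinv f hfmeas hf0 ⟨1, hf1⟩, integral_indicator_one hA, measureReal_def]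
  have hApos : 0 < (μ₀ A).toReal := by
    refine ENNReal.toReal_pos hA0 ?_
    exact ne_top_of_le_ne_top (by simp) (measure_mono (Set.subset_univ A))
  -- hence there is a point x₀ where P̄ f is positive
  have hx₀ : ∃ x₀, 0 < nlOp κ f x₀ := by
    by_contra hc
    push_neg at hc
    have hz : ∀ x, nlOp κ f x = 0 := fun x => le_antisymm (hc x) (nlOp_nonneg κ hf0 x)
    have : ∫ x, nlOp κ f x ∂μ₀ = 0 := by
      rw [show (fun x => nlOp κ f x) = fun _ => (0:ℝ) from funext hz]
      simp
    rw [hint] at this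
    exact hApos.ne' this
  obtain ⟨x₀, hx₀pos⟩ := hx₀
  set c : ℝ := nlOp κ f x₀ with hc
  -- the positive constant I = ∫ exp(-Ψ(x₀,y)) μ(dy)
  have hΨx₀meas : Measurable (fun y => Ψ x₀ y) :=
    hΨmeas.comp (measurable_prodMk_left)
  have hexpmeas : Measurable (fun y => Real.exp (-Ψ x₀ y)) :=
    Real.measurable_exp.comp hΨx₀meas.neg
  have hexple : ∀ y, Real.exp (-Ψ x₀ y) ≤ 1 := fun y =>
    Real.exp_le_one_iff.mpr (neg_nonpos.mpr (hΨnonneg x₀ y))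
  have hexpint : Integrable (fun y => Real.exp (-Ψ x₀ y)) μ :=
    aux_integrable hexpmeas (fun y => (Real.exp_pos _).le) hexple
  set I : ℝ := ∫ y, Real.exp (-Ψ x₀ y) ∂μ with hI
  have hIpos : 0 < I := by
    haveI : NeZero μ := ⟨IsProbabilityMeasure.ne_zero μ⟩
    exact integral_exp_pos hexpint
  -- key uniform bound: for all n, Φ (n * c) * I ≤ C * Φ 0
  have hkey : ∀ n : ℕ, Φ ((n : ℝ) * c) * I ≤ C * Φ 0 := by
    intro n
    set fn : EuclideanSpace ℝ (Fin d) → ℝ := fun z => (n : ℝ) * f z with hfn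
    have hfnmeas : Measurable fn := hfmeas.const_mul _
    have hfn0 : ∀ y, 0 ≤ fn y := fun y => mul_nonneg (Nat.cast_nonneg n) (hf0 y)
    have hfnbd : ∀ y, fn y ≤ (n : ℝ) := fun y => by
      calc (n : ℝ) * f y ≤ (n : ℝ) * 1 := by
            exact mul_le_mul_of_nonneg_left (hf1 y) (Nat.cast_nonneg n)
        _ = (n : ℝ) := mul_one _
    -- nlOp of fn at x₀ is n * c
    have hnl : nlOp κ fn x₀ = (n : ℝ) * c := by
      rw [hc]
      unfold nlOp
      rw [Real.mul_iSup_of_nonneg (Nat.cast_nonneg n)]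
      exact iSup_congr fun θ => integral_const_mul _ _
    -- the function Φ ∘ fn written measurably
    set Fn : EuclideanSpace ℝ (Fin d) → ℝ := fun z => if z ∈ A then Φ (n : ℝ) else Φ 0
      with hFn
    have hFneq : (fun z => Φ (fn z)) = Fn := by
      funext z
      by_cases hz : z ∈ A <;> simp [hFn, hfn, hf, hz]
    have hFnmeas : Measurable Fn := Measurable.ite hA measurable_const measurable_const
    have hFn0 : ∀ z, 0 ≤ Fn z := fun z => by
      by_cases hz : z ∈ A <;> simp only [hFn, hz, if_true, if_false]
      · exact hΦnonneg _ (Set.mem_Ici.mpr (Nat.cast_nonneg n))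
      · exact hΦnonneg _ (Set.mem_Ici.mpr le_rfl)
    have hΦ0n : Φ 0 ≤ Φ (n : ℝ) := hΦmono (Set.mem_Ici.mpr le_rfl) (Set.mem_Ici.mpr (Nat.cast_nonneg n)) (Nat.cast_nonneg n)
    have hFnbd : ∀ z, Fn z ≤ Φ (n : ℝ) := fun z => by
      by_cases hz : z ∈ A <;> simp only [hFn, hz, if_true, if_false]
      · exact le_rfl
      · exact hΦ0n
    -- Harnack pointwise bound
    have hpt : ∀ y, Φ ((n : ℝ) * c) * Real.exp (-Ψ x₀ y) ≤ nlOp κ Fn y := by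
      intro y
      have h := hHarnack fn hfnmeas hfn0 ⟨(n : ℝ), hfnbd⟩ x₀ y
      rw [hnl, hFneq] at h
      rw [Real.exp_neg]
      exact (mul_inv_le_iff₀ (Real.exp_pos _)).mpr h
    -- integrate over y
    have hΦnc0 : 0 ≤ Φ ((n : ℝ) * c) :=
      hΦnonneg _ (Set.mem_Ici.mpr (mul_nonneg (Nat.cast_nonneg n) hx₀pos.le))
    have hnlint : Integrable (fun y => nlOp κ Fn y) μ :=
      aux_integrable (hPmeas Fn hFnmeas hFn0 ⟨_, hFnbd⟩)
        (nlOp_nonneg κ hFn0) (nlOp_le κ hκ hFn0 hFnbd)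
    have h1 : Φ ((n : ℝ) * c) * I ≤ ∫ y, nlOp κ Fn y ∂μ := by
      rw [hI, ← integral_const_mul]
      exact integral_mono_of_nonneg
        (ae_of_all _ fun y => mul_nonneg hΦnc0 (Real.exp_pos _).le) hnlint
        (ae_of_all _ hpt)
    have h2 : ∫ y, nlOp κ Fn y ∂μ ≤ ∫ z, g z * Fn z ∂μ :=
      hquasi Fn hFnmeas hFn0 ⟨_, hFnbd⟩
    have h3 : ∫ z, g z * Fn z ∂μ ≤ C * Φ 0 := by
      have hae : ∀ᵐ z ∂μ, z ∉ A := by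
        rw [ae_iff]
        simpa using hAμ
      have hle : ∀ᵐ z ∂μ, g z * Fn z ≤ C * Φ 0 := by
        filter_upwards [hae] with z hz
        simp only [hFn, hz, if_false]
        exact mul_le_mul_of_nonneg_right (hgC z) (hΦnonneg _ (Set.mem_Ici.mpr le_rfl))
      calc ∫ z, g z * Fn z ∂μ ≤ ∫ _, C * Φ 0 ∂μ :=
            integral_mono_of_nonneg
              (ae_of_all _ fun z => mul_nonneg (hg0 z) (hFn0 z))
              (integrable_const _) hle
        _ = C * Φ 0 := by simp
    linarith
  -- contradiction: Φ (n*c) → ∞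
  obtain ⟨r₀, hr₀⟩ := (hΦtop.eventually_ge_atTop ((C * Φ 0 + 1) / I)).exists_forall_of_atTop
  obtain ⟨n, hn⟩ := exists_nat_ge (r₀ / c)
  have hnc : r₀ ≤ (n : ℝ) * c := by
    rw [div_le_iff₀ hx₀pos] at hn
    exact hn
  have hK : (C * Φ 0 + 1) / I ≤ Φ ((n : ℝ) * c) := hr₀ _ hnc
  have : C * Φ 0 + 1 ≤ Φ ((n : ℝ) * c) * I := by
    rw [div_le_iff₀ hIpos] at hK
    exact hK
  linarith [hkey n]
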